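/- Under the assumptions of infinite sampling and that each incorrect reasoning path yields a unique answer, the model error of self-consistency is at most the model error of perplexity: Σ_{ŷ} (p̂^(SC)(ŷ) − 𝟙[ŷ = y])² ≤ Σ_{t̂ ∈ R} (p(t̂) − 𝟙[g(t̂) = y])², where p̂^(SC)(ŷ) = Σ_{t̂ ∈ R} 𝟙[g(t̂) = ŷ] p(t̂). The inequality is strict if at least two distinct reasoning paths yield the correct answer. -/

import Mathlib

open Finset

private lemma expand_sum {T : Type*} (C : Finset T) (p : T → ℝ) :
    ∑ t ∈ C, (p t - 1)^2 = (∑ t ∈ C, p t ^ 2) - 2 * (∑ t ∈ C, p t) + C.card := by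
  have h : ∀ t, (p t - 1)^2 = p t ^ 2 - 2 * p t + 1 := fun t => by ring
  simp_rw [h]
  rw [Finset.sum_add_distrib, Finset.sum_sub_distrib, Finset.mul_sum, Finset.sum_const,
    nsmul_eq_mul, mul_one]

private lemma key_le {T : Type*} (C : Finset T) (p : T → ℝ)
    (h0 : ∀ t ∈ C, 0 ≤ p t) (hS1 : ∑ t ∈ C, p t ≤ 1) (hne : C.Nonempty) :
    ((∑ t ∈ C, p t) - 1)^2 ≤ ∑ t ∈ C, (p t - 1)^2 := by
  have hc : ((∑ t ∈ C, p t))^2 ≤ C.card * ∑ t ∈ C, p t ^ 2 := sq_sum_le_card_mul_sum_sq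
  have hn : (1:ℝ) ≤ (C.card : ℝ) := by exact_mod_cast Finset.card_pos.mpr hne
  have hS0 : 0 ≤ ∑ t ∈ C, p t := Finset.sum_nonneg h0
  rw [expand_sum]
  set S := ∑ t ∈ C, p t
  set n := (C.card : ℝ)
  nlinarith [mul_nonneg (sub_nonneg.2 hn) (sub_nonneg.2 (le_trans (by nlinarith : S^2 ≤ 1) hn)), sq_nonneg S]

private lemma key_lt {T : Type*} (C : Finset T) (p : T → ℝ)
    (h0 : ∀ t ∈ C, 0 ≤ p t) (hS1 : ∑ t ∈ C, p t ≤ 1) (hcard : 2 ≤ C.card) :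
    ((∑ t ∈ C, p t) - 1)^2 < ∑ t ∈ C, (p t - 1)^2 := by
  have hc : ((∑ t ∈ C, p t))^2 ≤ C.card * ∑ t ∈ C, p t ^ 2 := sq_sum_le_card_mul_sum_sq
  have hn : (2:ℝ) ≤ (C.card : ℝ) := by exact_mod_cast hcard
  have hS0 : 0 ≤ ∑ t ∈ C, p t := Finset.sum_nonneg h0
  rw [expand_sum]
  set S := ∑ t ∈ C, p t
  set n := (C.card : ℝ)
  have h1 : S^2 ≤ 1 := by nlinarith
  nlinarith [mul_le_mul (by linarith : (1:ℝ) ≤ n - 1) (by linarith : (1:ℝ) ≤ n - S^2) (by norm_num) (by linarith)]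

theorem stmt11 {T A : Type*} [DecidableEq T] [DecidableEq A]
    (R : Finset T) (prob : T → ℝ) (g : T → A) (y : A)
    (hprob : ∀ t ∈ R, prob t ∈ Set.Icc (0:ℝ) 1)
    (hsum : ∑ t ∈ R, prob t ≤ 1)
    (huniq : ∀ t₁ ∈ R, ∀ t₂ ∈ R, g t₁ ≠ y → g t₁ = g t₂ → t₁ = t₂) :
    (∑ a ∈ R.image g,
        ((∑ t ∈ R, if g t = a then prob t else 0) - if a = y then 1 else 0) ^ 2)
      ≤ ∑ t ∈ R, (prob t - if g t = y then 1 else 0) ^ 2 ∧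
    ((∃ t₁ ∈ R, ∃ t₂ ∈ R, t₁ ≠ t₂ ∧ g t₁ = y ∧ g t₂ = y) →
      (∑ a ∈ R.image g,
        ((∑ t ∈ R, if g t = a then prob t else 0) - if a = y then 1 else 0) ^ 2)
      < ∑ t ∈ R, (prob t - if g t = y then 1 else 0) ^ 2) := by
  classical
  set C := R.filter (fun t => g t = y) with hC
  set W := R.filter (fun t => ¬ g t = y) with hW
  have h0 : ∀ t ∈ R, 0 ≤ prob t := fun t ht => (hprob t ht).1
  -- RHS decomposition
  have hRHS : ∑ t ∈ R, (prob t - if g t = y then 1 else 0) ^ 2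
      = (∑ t ∈ C, (prob t - 1)^2) + ∑ t ∈ W, prob t ^ 2 := by
    rw [← Finset.sum_filter_add_sum_filter_not R (fun t => g t = y)]
    congr 1
    · apply Finset.sum_congr rfl
      intro t ht
      rw [Finset.mem_filter] at ht
      simp [ht.2]
    · apply Finset.sum_congr rfl
      intro t ht
      rw [Finset.mem_filter] at ht
      simp [ht.2]
  -- confidence of wrong answers
  have hconf : ∀ t ∈ W, (∑ t' ∈ R, if g t' = g t then prob t' else 0) = prob t := by
    intro t ht
    rw [Finset.mem_filter] at ht
    rw [← Finset.sum_filter]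
    have : R.filter (fun t' => g t' = g t) = {t} := by
      ext t'
      simp only [Finset.mem_filter, Finset.mem_singleton]
      constructor
      · rintro ⟨ht', hgt⟩
        exact (huniq t ht.1 t' ht' ht.2 hgt.symm).symm
      · rintro rfl; exact ⟨ht.1, rfl⟩
    rw [this, Finset.sum_singleton]
  -- LHS decomposition
  have himg : (R.image g).filter (fun a => ¬ a = y) = W.image g := by
    ext a
    simp only [Finset.mem_filter, Finset.mem_image, hW]
    constructor
    · rintro ⟨⟨t, ht, rfl⟩, hne⟩
      exact ⟨t, ⟨ht, hne⟩, rfl⟩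
    · rintro ⟨t, ⟨ht, hne⟩, rfl⟩
      exact ⟨⟨t, ht, rfl⟩, hne⟩
  have hinjW : Set.InjOn g W := by
    intro t₁ h₁ t₂ h₂ h
    rw [Finset.coe_filter] at h₁ h₂
    exact huniq t₁ h₁.1 t₂ h₂.1 h₁.2 h
  have hLHS : (∑ a ∈ R.image g,
        ((∑ t ∈ R, if g t = a then prob t else 0) - if a = y then 1 else 0) ^ 2)
      = (∑ a ∈ (R.image g).filter (fun a => a = y),
          ((∑ t ∈ R, if g t = a then prob t else 0) - 1) ^ 2) + ∑ t ∈ W, prob t ^ 2 := by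
    rw [← Finset.sum_filter_add_sum_filter_not (R.image g) (fun a => a = y)]
    congr 1
    · apply Finset.sum_congr rfl
      intro a ha
      rw [Finset.mem_filter] at ha
      simp [ha.2]
    · rw [himg, Finset.sum_image hinjW]
      apply Finset.sum_congr rfl
      intro t ht
      have hne : ¬ g t = y := (Finset.mem_filter.1 ht).2
      simp [hne, hconf t ht]
  -- sum over C
  have hSy : ∀ a, a = y → (∑ t ∈ R, if g t = a then prob t else 0) = ∑ t ∈ C, prob t := by
    rintro a rfl
    rw [← Finset.sum_filter]
  have hSC1 : ∑ t ∈ C, prob t ≤ 1 :=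
    le_trans (Finset.sum_le_sum_of_subset_of_nonneg (Finset.filter_subset _ _)
      (fun t ht _ => h0 t ht)) hsum
  have h0C : ∀ t ∈ C, 0 ≤ prob t := fun t ht => h0 t (Finset.mem_filter.1 ht).1
  rw [hLHS, hRHS]
  by_cases hne : C.Nonempty
  · have hy : y ∈ R.image g := by
      obtain ⟨t, ht⟩ := hne
      rw [Finset.mem_filter] at ht
      exact Finset.mem_image.2 ⟨t, ht.1, ht.2⟩
    rw [Finset.filter_eq', if_pos hy, Finset.sum_singleton, hSy y rfl]
    refine ⟨add_le_add_left (key_le C prob h0C hSC1 hne) _, ?_⟩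
    rintro ⟨t₁, h₁, t₂, h₂, hne12, hg1, hg2⟩
    have hcard : 2 ≤ C.card := by
      have m₁ : t₁ ∈ C := Finset.mem_filter.2 ⟨h₁, hg1⟩
      have m₂ : t₂ ∈ C := Finset.mem_filter.2 ⟨h₂, hg2⟩
      exact Finset.one_lt_card.2 ⟨t₁, m₁, t₂, m₂, hne12⟩
    exact add_lt_add_of_lt_of_le (key_lt C prob h0C hSC1 hcard) le_rfl
  · have hy : y ∉ R.image g := by
      intro hy
      obtain ⟨t, ht, hgt⟩ := Finset.mem_image.1 hy
      exact hne ⟨t, Finset.mem_filter.2 ⟨ht, hgt⟩⟩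
    have hCe : C = ∅ := Finset.not_nonempty_iff_eq_empty.1 hne
    rw [Finset.filter_eq', if_neg hy, Finset.sum_empty, hCe, Finset.sum_empty]
    refine ⟨le_refl _, ?_⟩
    rintro ⟨t₁, h₁, t₂, h₂, hne12, hg1, hg2⟩
    exact absurd ⟨t₁, Finset.mem_filter.2 ⟨h₁, hg1⟩⟩ hne
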